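/- For integers n, k with 1 <= k < n, the number of flattened {1}-insertion parking functions of order n+1 with k runs satisfies f({1}; n+1, k) = f_{n+1, k} + sum_{i=1}^{n} binom(n, i) * f_{n-i+1, k-1}, where f_{m,j} denotes the number of flattened permutations of [m] with j runs. -/

import Mathlib

namespace FlatPF

/-- Decomposition of a word into maximal weakly increasing runs. -/
def runs : List ℕ → List (List ℕ)
  | [] => []
  | a :: l =>
    match runs l with
    | [] => [[a]]
    | [] :: rs => [a] :: rs
    | (b :: t) :: rs => if a ≤ b then (a :: b :: t) :: rs else [a] :: (b :: t) :: rs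

/-- The number of maximal weakly increasing runs of a word. -/
def numRuns (w : List ℕ) : ℕ := (runs w).length

/-- A word is flattened if the leading values of its runs are weakly increasing. -/
def IsFlattened (w : List ℕ) : Prop :=
  List.Chain' (· ≤ ·) ((runs w).map (fun r => r.headD 0))

/-- A word is a parking function: entries in `[m]` and the weakly increasing
rearrangement `(a'_1, …, a'_m)` satisfies `a'_i ≤ i`. -/
def IsPF (w : List ℕ) : Prop :=
  (∀ x ∈ w, 1 ≤ x ∧ x ≤ w.length) ∧
  ∀ i < w.length, (w.mergeSort (· ≤ ·)).getD i 0 ≤ i + 1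

/-- `w` is obtained by inserting the elements of the multiset `S` into some
permutation of `[n]`, keeping the letters of the permutation in relative order. -/
def IsInsertion (S : Multiset ℕ) (n : ℕ) (w : List ℕ) : Prop :=
  (↑w : Multiset ℕ) = ↑(List.range' 1 n) + S ∧
  ∃ p : List ℕ, p.Perm (List.range' 1 n) ∧ p.Sublist w

/-- Flattened `S`-insertion parking functions of order `n`. -/
def flatIns (S : Multiset ℕ) (n : ℕ) : Set (List ℕ) :=
  {w | IsInsertion S n w ∧ IsFlattened w}

/-- Flattened `S`-insertion parking functions of order `n` with exactly `k` runs. -/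
def flatInsK (S : Multiset ℕ) (n k : ℕ) : Set (List ℕ) :=
  {w | IsInsertion S n w ∧ IsFlattened w ∧ numRuns w = k}

/-- `f(S; n, k)`, the number of flattened `S`-insertion parking functions of order `n`
with exactly `k` runs.  In particular `fS 0 n k` is the number of flattened
permutations of `[n]` with `k` runs. -/
noncomputable def fS (S : Multiset ℕ) (n k : ℕ) : ℕ := (flatInsK S n k).ncard

end FlatPF

namespace FlatPF

lemma runs_cons_ex (a : ℕ) (l : List ℕ) : ∃ t rs, runs (a :: l) = (a :: t) :: rs := by
  rw [runs]
  rcases h : runs l with _ | ⟨r, rs⟩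
  · exact ⟨[], [], rfl⟩
  · cases r with
    | nil => exact ⟨[], rs, rfl⟩
    | cons b t =>
      by_cases hab : a ≤ b
      · exact ⟨b :: t, rs, by simp [hab]⟩
      · exact ⟨[], (b :: t) :: rs, by simp [hab]⟩

lemma runs_cons_cons_of_le {a b : ℕ} (t : List ℕ) (h : a ≤ b) {r : List ℕ} {rs : List (List ℕ)}
    (hr : runs (b :: t) = r :: rs) : runs (a :: b :: t) = (a :: r) :: rs := by
  obtain ⟨u, rs', h'⟩ := runs_cons_ex b t
  rw [h'] at hr
  obtain ⟨rfl, rfl⟩ : b :: u = r ∧ rs' = rs := by simpa using hr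
  rw [runs, h']
  simp [h]

lemma runs_cons_cons_of_gt {a b : ℕ} (t : List ℕ) (h : ¬ a ≤ b) :
    runs (a :: b :: t) = [a] :: runs (b :: t) := by
  obtain ⟨u, rs', h'⟩ := runs_cons_ex b t
  rw [runs, h']
  simp [h, h']

lemma runs_join : ∀ w : List ℕ, (runs w).flatten = w := by
  intro w
  induction w with
  | nil => rfl
  | cons a l ih =>
    cases l with
    | nil => rfl
    | cons b t =>
      obtain ⟨u, rs, h⟩ := runs_cons_ex b t
      by_cases hab : a ≤ b
      · rw [runs_cons_cons_of_le t hab h]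
        rw [h] at ih
        simpa using ih
      · rw [runs_cons_cons_of_gt t hab, h]
        rw [h] at ih
        simpa using ih

lemma runs_ne_nil : ∀ {w : List ℕ}, ∀ r ∈ runs w, r ≠ [] := by
  intro w
  induction w with
  | nil => simp [runs]
  | cons a l ih =>
    cases l with
    | nil => simp [runs]
    | cons b t =>
      obtain ⟨u, rs, h⟩ := runs_cons_ex b t
      rw [h] at ih
      by_cases hab : a ≤ b
      · rw [runs_cons_cons_of_le t hab h]
        intro r hr
        rw [List.mem_cons] at hr
        rcases hr with rfl | hr
        · simp
        · exact ih r (by simp [hr])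
      · rw [runs_cons_cons_of_gt t hab, h]
        intro r hr
        rw [List.mem_cons] at hr
        rcases hr with rfl | hr
        · simp
        · exact ih r hr

lemma runs_chain : ∀ {w : List ℕ}, ∀ r ∈ runs w, r.Chain' (· ≤ ·) := by
  intro w
  induction w with
  | nil => simp [runs]
  | cons a l ih =>
    cases l with
    | nil => simp [runs, List.Chain']
    | cons b t =>
      obtain ⟨u, rs, h⟩ := runs_cons_ex b t
      rw [h] at ih
      by_cases hab : a ≤ b
      · rw [runs_cons_cons_of_le t hab h]
        intro r hr
        rw [List.mem_cons] at hr
        rcases hr with rfl | hr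
        · exact List.isChain_cons_cons.mpr ⟨hab, ih _ List.mem_cons_self⟩
        · exact ih r (by simp [hr])
      · rw [runs_cons_cons_of_gt t hab, h]
        intro r hr
        rw [List.mem_cons] at hr
        rcases hr with rfl | hr
        · simp [List.Chain']
        · exact ih r hr

end FlatPF

namespace FlatPF

lemma runs_sorted_append : ∀ (R l : List ℕ), R ≠ [] → R.Chain' (· ≤ ·) →
    (∀ x ∈ R.getLast?, ∀ h ∈ l.head?, ¬ x ≤ h) → runs (R ++ l) = R :: runs l := by
  intro R
  induction R with
  | nil => simp
  | cons a R' ih =>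
    intro l _ hch hlast
    cases R' with
    | nil =>
      cases l with
      | nil => simp [runs]
      | cons b t =>
        have : ¬ a ≤ b := hlast a (by simp) b (by simp)
        simpa using runs_cons_cons_of_gt t this
    | cons a' R'' =>
      have hch' : (a' :: R'').Chain' (· ≤ ·) := hch.tail
      have haa' : a ≤ a' := (List.isChain_cons_cons.mp hch).1
      have hIH : runs ((a' :: R'') ++ l) = (a' :: R'') :: runs l := by
        refine ih l (by simp) hch' ?_
        intro x hx h hh
        apply hlast x _ h hh
        rw [List.getLast?_cons_cons]
        exact hx
      have : (a :: a' :: R'') ++ l = a :: a' :: (R'' ++ l) := by simp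
      rw [this]
      rw [runs_cons_cons_of_le (R'' ++ l) haa' hIH]

/-- heads of runs -/
def heads (w : List ℕ) : List ℕ := (runs w).map (fun r => r.headD 0)

lemma isFlattened_iff_pairwise {w : List ℕ} :
    IsFlattened w ↔ (heads w).Pairwise (· ≤ ·) := List.isChain_iff_pairwise

lemma head_mem_self_of_runs {w : List ℕ} {r : List ℕ} (hr : r ∈ runs w) : r.headD 0 ∈ w := by
  have hne := runs_ne_nil r hr
  have : r.headD 0 ∈ r := by
    cases r with
    | nil => simp at hne
    | cons x t => simp
  rw [← runs_join w]
  exact List.mem_flatten.mpr ⟨r, hr, this⟩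

lemma exists_head_one {v : List ℕ} (h1 : 1 ∈ v) (hge : ∀ x ∈ v, 1 ≤ x) :
    (1 : ℕ) ∈ heads v := by
  rw [← runs_join v] at h1
  obtain ⟨r, hr, h1r⟩ := List.mem_flatten.mp h1
  have hch := runs_chain r hr
  have hne := runs_ne_nil r hr
  cases r with
  | nil => simp at hne
  | cons x t =>
    have hx1 : x ≤ 1 := by
      rw [List.Chain', List.isChain_iff_pairwise] at hch
      rcases List.mem_cons.mp h1r with h | h
      · omega
      · exact (List.pairwise_cons.mp hch).1 1 h
    have : 1 ≤ x := hge x (by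
      have := head_mem_self_of_runs (w := v) (r := x :: t) hr
      simpa using this)
    have hx : x = 1 := le_antisymm hx1 this
    refine List.mem_map.mpr ⟨x :: t, hr, by simp [hx]⟩

lemma flattened_head_one {w : List ℕ} (hw : IsFlattened w) (h1 : 1 ∈ w)
    (hge : ∀ x ∈ w, 1 ≤ x) : ∃ t, w = 1 :: t := by
  cases w with
  | nil => simp at h1
  | cons a l =>
    refine ⟨l, ?_⟩
    obtain ⟨u, rs, h⟩ := runs_cons_ex a l
    have hh : heads (a :: l) = a :: rs.map (fun r => r.headD 0) := by
      simp [heads, h]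
    have h1h : (1:ℕ) ∈ heads (a :: l) := exists_head_one h1 hge
    rw [isFlattened_iff_pairwise, hh] at hw
    rw [hh] at h1h
    have ha1 : a ≤ 1 := by
      rcases List.mem_cons.mp h1h with h' | h'
      · omega
      · exact (List.pairwise_cons.mp hw).1 1 h'
    have : a = 1 := le_antisymm ha1 (hge a (by simp))
    rw [this]

lemma exists_first_descent : ∀ (A : List ℕ), ¬ A.Chain' (· ≤ ·) →
    ∃ A₁ x y A₂, A = A₁ ++ x :: y :: A₂ ∧ (A₁ ++ [x]).Chain' (· ≤ ·) ∧ ¬ x ≤ y := by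
  intro A
  induction A with
  | nil => simp [List.Chain']
  | cons a A' ih =>
    intro h
    cases A' with
    | nil => simp [List.Chain'] at h
    | cons b A'' =>
      by_cases hab : a ≤ b
      · have hA' : ¬ (b :: A'').Chain' (· ≤ ·) := by
          intro hc
          exact h (List.isChain_cons_cons.mpr ⟨hab, hc⟩)
        obtain ⟨A₁, x, y, A₂, heq, hch, hxy⟩ := ih hA'
        refine ⟨a :: A₁, x, y, A₂, by simp [heq], ?_, hxy⟩
        rw [List.cons_append, List.Chain', List.isChain_cons]
        refine ⟨?_, hch⟩
        intro z hz
        have : (A₁ ++ [x]).head? = some b := by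
          cases A₁ with
          | nil =>
            simp only [List.nil_append, List.cons.injEq] at heq
            simp [heq.1]
          | cons c t =>
            simp only [List.cons_append, List.cons.injEq] at heq
            simp [heq.1]
        rw [this] at hz
        simp at hz
        omega
      · exact ⟨[], a, b, A'', by simp, by simp [List.Chain'], hab⟩

end FlatPF

namespace FlatPF

lemma sorted_sublist : ∀ (l₂ l₁ : List ℕ), l₂.Pairwise (· < ·) → l₁.Pairwise (· < ·) →
    l₁ ⊆ l₂ → l₁.Sublist l₂ := by
  intro l₂
  induction l₂ with
  | nil =>
    intro l₁ _ _ hsub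
    simp [List.subset_nil.mp hsub]
  | cons b t ih =>
    intro l₁ h₂ h₁ hsub
    cases l₁ with
    | nil => simp
    | cons a s =>
      by_cases hab : a = b
      · subst hab
        refine List.Sublist.cons₂ a ?_
        refine ih s h₂.tail h₁.tail ?_
        intro x hx
        have hax : a < x := (List.pairwise_cons.mp h₁).1 x hx
        have : x ∈ a :: t := hsub (by simp [hx])
        rcases List.mem_cons.mp this with rfl | h
        · omega
        · exact h
      · have hat : a ∈ t := by
          have : a ∈ b :: t := hsub (by simp)
          rcases List.mem_cons.mp this with h | h
          · exact absurd h hab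
          · exact h
        have hba : b < a := (List.pairwise_cons.mp h₂).1 a hat
        refine (ih (a :: s) h₂.tail h₁ ?_).cons b
        intro x hx
        have : x ∈ b :: t := hsub hx
        rcases List.mem_cons.mp this with rfl | h
        · exfalso
          rcases List.mem_cons.mp hx with h' | h'
          · omega
          · have := (List.pairwise_cons.mp h₁).1 x h'
            omega
        · exact h
  
lemma ins1_iff {n : ℕ} {w : List ℕ} :
    IsInsertion {1} (n + 1) w ↔ (↑w : Multiset ℕ) = ↑(List.range' 1 (n + 1)) + {1} := by
  constructor
  · exact fun h => h.1
  · intro h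
    refine ⟨h, w.erase 1, ?_, List.erase_sublist (a := 1) (l := w)⟩
    rw [← Multiset.coe_eq_coe, ← Multiset.coe_erase, h]
    rw [add_comm, Multiset.singleton_add, Multiset.erase_cons_head]

lemma ins0_iff {m : ℕ} {w : List ℕ} :
    IsInsertion 0 m w ↔ w.Perm (List.range' 1 m) := by
  constructor
  · intro h
    have := h.1
    rw [add_zero, Multiset.coe_eq_coe] at this
    exact this
  · intro h
    exact ⟨by rw [add_zero, Multiset.coe_eq_coe]; exact h, w, h, List.Sublist.refl w⟩

lemma runs_one_one (B : List ℕ) : ∃ u rs, runs (1 :: B) = (1 :: u) :: rs ∧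
    runs (1 :: 1 :: B) = (1 :: 1 :: u) :: rs := by
  obtain ⟨u, rs, h⟩ := runs_cons_ex 1 B
  exact ⟨u, rs, h, runs_cons_cons_of_le B le_rfl h⟩

lemma flat_one_one (B : List ℕ) :
    (IsFlattened (1 :: 1 :: B) ↔ IsFlattened (1 :: B)) ∧
      numRuns (1 :: 1 :: B) = numRuns (1 :: B) := by
  obtain ⟨u, rs, h1, h2⟩ := runs_one_one B
  constructor
  · unfold IsFlattened
    rw [h1, h2]
    simp
  · unfold numRuns
    rw [h1, h2]
    simp

end FlatPF

namespace FlatPF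

lemma runs_map {f : ℕ → ℕ} {s : Set ℕ} (hf : StrictMonoOn f s) :
    ∀ w : List ℕ, (∀ x ∈ w, x ∈ s) → runs (w.map f) = (runs w).map (List.map f) := by
  intro w
  induction w with
  | nil => simp [runs]
  | cons a l ih =>
    intro hmem
    cases l with
    | nil => simp [runs]
    | cons b t =>
      obtain ⟨u, rs, h⟩ := runs_cons_ex b t
      have ihm : runs ((b :: t).map f) = (f b :: u.map f) :: rs.map (List.map f) := by
        rw [ih (fun x hx => hmem x (List.mem_cons.mpr (Or.inr hx))), h]
        simp
      have ha : a ∈ s := hmem a (by simp)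
      have hb : b ∈ s := hmem b (by simp)
      by_cases hab : a ≤ b
      · have hfab : f a ≤ f b := (hf.le_iff_le ha hb).mpr hab
        have lhs : runs ((a :: b :: t).map f) = (f a :: f b :: u.map f) :: rs.map (List.map f) := by
          simp only [List.map_cons]
          exact runs_cons_cons_of_le _ hfab ihm
        rw [lhs, runs_cons_cons_of_le t hab h]
        simp
      · have hfab : ¬ f a ≤ f b := by
          rw [hf.le_iff_le ha hb]
          exact hab
        have lhs : runs ((a :: b :: t).map f) = [f a] :: runs ((b :: t).map f) := by
          simp only [List.map_cons]
          exact runs_cons_cons_of_gt _ hfab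
        rw [lhs, runs_cons_cons_of_gt t hab, ihm, h]
        simp

lemma heads_map {f : ℕ → ℕ} {s : Set ℕ} (hf : StrictMonoOn f s)
    (w : List ℕ) (hmem : ∀ x ∈ w, x ∈ s) : heads (w.map f) = (heads w).map f := by
  unfold heads
  rw [runs_map hf w hmem, List.map_map, List.map_map]
  refine List.map_congr_left ?_
  intro r hr
  have := runs_ne_nil r hr
  cases r with
  | nil => simp_all
  | cons x tt => simp

lemma mem_heads {w : List ℕ} {x : ℕ} (hx : x ∈ heads w) : x ∈ w := by
  obtain ⟨r, hr, rfl⟩ := List.mem_map.mp hx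
  exact head_mem_self_of_runs hr

lemma flat_map_iff {f : ℕ → ℕ} {s : Set ℕ} (hf : StrictMonoOn f s)
    (w : List ℕ) (hmem : ∀ x ∈ w, x ∈ s) : (IsFlattened (w.map f) ↔ IsFlattened w) := by
  rw [isFlattened_iff_pairwise, isFlattened_iff_pairwise, heads_map hf w hmem,
    List.pairwise_map]
  constructor
  · intro h
    refine h.imp_of_mem ?_
    intro a b ha hb hab
    exact (hf.le_iff_le (hmem a (mem_heads ha)) (hmem b (mem_heads hb))).mp hab
  · intro h
    refine h.imp_of_mem ?_
    intro a b ha hb hab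
    exact (hf.le_iff_le (hmem a (mem_heads ha)) (hmem b (mem_heads hb))).mpr hab

lemma numRuns_map {f : ℕ → ℕ} {s : Set ℕ} (hf : StrictMonoOn f s)
    (w : List ℕ) (hmem : ∀ x ∈ w, x ∈ s) : numRuns (w.map f) = numRuns w := by
  unfold numRuns
  rw [runs_map hf w hmem]
  simp

lemma map_injOn_lists {f : ℕ → ℕ} {s : Set ℕ} (hf : Set.InjOn f s) :
    ∀ u₁ u₂ : List ℕ, (∀ x ∈ u₁, x ∈ s) → (∀ x ∈ u₂, x ∈ s) →
      u₁.map f = u₂.map f → u₁ = u₂ := by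
  intro u₁
  induction u₁ with
  | nil =>
    intro u₂ _ _ h
    cases u₂ <;> simp_all
  | cons a t ih =>
    intro u₂ h1 h2 h
    cases u₂ with
    | nil => simp at h
    | cons b t₂ =>
      simp only [List.map_cons, List.cons.injEq] at h
      have hab : a = b := hf (h1 a (by simp)) (h2 b (by simp)) h.1
      rw [hab, ih t₂ (fun x hx => h1 x (by simp [hx])) (fun x hx => h2 x (by simp [hx])) h.2]

lemma indexOf_lt_of_lt {L : List ℕ} (hL : L.Pairwise (· < ·)) {x y : ℕ}
    (hx : x ∈ L) (hy : y ∈ L) (hxy : x < y) : L.idxOf x < L.idxOf y := by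
  have hix := List.idxOf_lt_length_iff.mpr hx
  have hiy := List.idxOf_lt_length_iff.mpr hy
  have hgx : L[L.idxOf x] = x := List.getElem_idxOf hix
  have hgy : L[L.idxOf y] = y := List.getElem_idxOf hiy
  by_contra hle
  push_neg at hle
  rcases lt_or_eq_of_le hle with h | h
  · have := List.pairwise_iff_getElem.mp hL _ _ hiy hix h
    omega
  · have : x = y := by
      rw [← hgx, ← hgy]
      simp only [h]
    omega

end FlatPF

namespace FlatPF

def P (L : List ℕ) (j : ℕ) : Set (List ℕ) :=
  {u : List ℕ | (↑u : Multiset ℕ) = ↑L ∧ IsFlattened u ∧ numRuns u = j}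

def reIdx (L₁ L₂ : List ℕ) (x : ℕ) : ℕ := L₂.getD (L₁.idxOf x) 0

lemma reIdx_strictMonoOn {L₁ L₂ : List ℕ} (h₁ : L₁.Pairwise (· < ·))
    (h₂ : L₂.Pairwise (· < ·)) (hlen : L₁.length = L₂.length) :
    StrictMonoOn (reIdx L₁ L₂) {x | x ∈ L₁} := by
  intro x hx y hy hxy
  have hidy := List.idxOf_lt_length_iff.mpr hy
  have hidx := List.idxOf_lt_length_iff.mpr hx
  have hlt := indexOf_lt_of_lt h₁ hx hy hxy
  unfold reIdx
  rw [List.getD_eq_getElem _ _ (by omega), List.getD_eq_getElem _ _ (by omega)]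
  exact List.pairwise_iff_getElem.mp h₂ _ _ (by omega) (by omega) hlt

lemma reIdx_map {L₁ L₂ : List ℕ} (h₁ : L₁.Pairwise (· < ·))
    (hlen : L₁.length = L₂.length) : L₁.map (reIdx L₁ L₂) = L₂ := by
  have hnd : L₁.Nodup := h₁.imp (fun h => ne_of_lt h)
  refine List.ext_getElem (by simp [hlen]) ?_
  intro i hi₁ hi₂
  simp only [List.getElem_map]
  unfold reIdx
  rw [List.Nodup.idxOf_getElem hnd, List.getD_eq_getElem _ _ (by simp at hi₁; omega)]

lemma reIdx_inv {L₁ L₂ : List ℕ} (h₁ : L₁.Pairwise (· < ·))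
    (hlen : L₁.length = L₂.length) {x : ℕ} (hx : x ∈ L₂) :
    reIdx L₁ L₂ (reIdx L₂ L₁ x) = x := by
  have hnd : L₁.Nodup := h₁.imp (fun h => ne_of_lt h)
  have hidx := List.idxOf_lt_length_iff.mpr hx
  unfold reIdx
  rw [List.getD_eq_getElem L₁ 0 (by omega), List.Nodup.idxOf_getElem hnd,
    List.getD_eq_getElem L₂ 0 (by omega), List.getElem_idxOf hidx]

lemma P_mem_of_mem {L : List ℕ} {j : ℕ} {u : List ℕ} (hu : u ∈ P L j) :
    ∀ x ∈ u, x ∈ L := by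
  intro x hx
  have := hu.1
  have : x ∈ (↑L : Multiset ℕ) := by rw [← this]; exact hx
  simpa using this

lemma P_image_subset {L₁ L₂ : List ℕ} (h₁ : L₁.Pairwise (· < ·))
    (h₂ : L₂.Pairwise (· < ·)) (hlen : L₁.length = L₂.length) (j : ℕ) :
    (fun u => u.map (reIdx L₁ L₂)) '' P L₁ j ⊆ P L₂ j := by
  rintro _ ⟨u, hu, rfl⟩
  have hmem : ∀ x ∈ u, x ∈ ({x | x ∈ L₁} : Set ℕ) := fun x hx => P_mem_of_mem hu x hx
  have hmono := reIdx_strictMonoOn h₁ h₂ hlen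
  have hperm : u.Perm L₁ := Multiset.coe_eq_coe.mp hu.1
  refine ⟨?_, ?_, ?_⟩
  · show (↑(u.map (reIdx L₁ L₂)) : Multiset ℕ) = ↑L₂
    rw [Multiset.coe_eq_coe]
    have := hperm.map (reIdx L₁ L₂)
    rwa [reIdx_map h₁ hlen] at this
  · exact (flat_map_iff hmono u hmem).mpr hu.2.1
  · rw [numRuns_map hmono u hmem]
    exact hu.2.2

lemma P_image_eq {L₁ L₂ : List ℕ} (h₁ : L₁.Pairwise (· < ·))
    (h₂ : L₂.Pairwise (· < ·)) (hlen : L₁.length = L₂.length) (j : ℕ) :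
    (fun u => u.map (reIdx L₁ L₂)) '' P L₁ j = P L₂ j := by
  refine le_antisymm (P_image_subset h₁ h₂ hlen j) ?_
  intro v hv
  refine ⟨v.map (reIdx L₂ L₁), P_image_subset h₂ h₁ hlen.symm j ⟨v, hv, rfl⟩, ?_⟩
  show List.map (reIdx L₁ L₂) (List.map (reIdx L₂ L₁) v) = v
  rw [List.map_map]
  have : ∀ x ∈ v, (reIdx L₁ L₂ ∘ reIdx L₂ L₁) x = x := by
    intro x hx
    exact reIdx_inv h₁ hlen (P_mem_of_mem hv x hx)
  rw [List.map_congr_left this]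
  simp

lemma ncard_P_eq {L₁ L₂ : List ℕ} (h₁ : L₁.Pairwise (· < ·))
    (h₂ : L₂.Pairwise (· < ·)) (hlen : L₁.length = L₂.length) (j : ℕ) :
    (P L₁ j).ncard = (P L₂ j).ncard := by
  rw [← P_image_eq h₁ h₂ hlen j]
  refine (Set.ncard_image_of_injOn ?_).symm
  intro u₁ hu₁ u₂ hu₂ h
  exact map_injOn_lists (reIdx_strictMonoOn h₁ h₂ hlen).injOn u₁ u₂
    (fun x hx => P_mem_of_mem hu₁ x hx) (fun x hx => P_mem_of_mem hu₂ x hx) h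

lemma range'_pairwise (a n : ℕ) : (List.range' a n).Pairwise (· < ·) := by
  induction n generalizing a with
  | zero => simp
  | succ m ih =>
    rw [List.range'_succ]
    refine List.pairwise_cons.mpr ⟨?_, ih (a+1)⟩
    intro b hb
    have := List.mem_range'.mp hb
    omega

lemma fS0_eq_P (m j : ℕ) : fS 0 m j = (P (List.range' 1 m) j).ncard := by
  unfold fS
  congr 1
  unfold flatInsK P
  ext w
  simp only [Set.mem_setOf_eq, ins0_iff, Multiset.coe_eq_coe]

lemma ncard_P_sorted (L : List ℕ) (hL : L.Pairwise (· < ·)) (j : ℕ) :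
    (P L j).ncard = fS 0 L.length j := by
  rw [fS0_eq_P]
  exact ncard_P_eq hL (range'_pairwise 1 L.length) (by simp) j

end FlatPF

namespace FlatPF

lemma mem_w_facts {n : ℕ} {w : List ℕ}
    (hmul : (↑w : Multiset ℕ) = ↑(List.range' 1 (n + 1)) + {1}) :
    (∀ x ∈ w, 1 ≤ x ∧ x ≤ n + 1) ∧ w.count 1 = 2 ∧ (∀ x, x ≠ 1 → w.count x ≤ 1)
      ∧ 1 ∈ w := by
  have hcnt : ∀ x : ℕ, w.count x =
      (List.range' 1 (n+1)).count x + (if x = 1 then 1 else 0) := by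
    intro x
    have := congrArg (Multiset.count x) hmul
    rw [Multiset.coe_count] at this
    rw [this]
    rw [Multiset.count_add, Multiset.coe_count, Multiset.count_singleton]
  have hnd : (List.range' 1 (n+1)).Nodup := List.nodup_range' (s := 1) (n := n+1)
  refine ⟨?_, ?_, ?_, ?_⟩
  · intro x hx
    have : x ∈ (↑w : Multiset ℕ) := hx
    rw [hmul] at this
    rcases Multiset.mem_add.mp this with h | h
    · have : x ∈ List.range' 1 (n+1) := by simpa using h
      have := List.mem_range'_1.mp this
      omega
    · have : x = 1 := by simpa using h
      omega
  · rw [hcnt 1, if_pos rfl, List.count_eq_one_of_mem hnd (List.mem_range'_1.mpr (by omega))]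
  · intro x hx
    rw [hcnt x, if_neg hx]
    have := List.nodup_iff_count_le_one.mp hnd x
    omega
  · have : (0:ℕ) < w.count 1 := by
      rw [hcnt 1, if_pos rfl]
      omega
    exact List.count_pos_iff.mp this

/-- Master structural lemma. -/
lemma master {n k : ℕ} {w : List ℕ} (hw : w ∈ flatInsK {1} (n + 1) k) :
    ∃ B, w = 1 :: (w.tail.takeWhile (· != 1)) ++ 1 :: B ∧
      (w.tail.takeWhile (· != 1)).Sublist (List.range' 2 n) := by
  obtain ⟨hins, hflat, hruns⟩ := hw
  have hmul := (ins1_iff.mp hins)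
  obtain ⟨hbound, hc1, hcx, h1w⟩ := mem_w_facts hmul
  have hge : ∀ x ∈ w, 1 ≤ x := fun x hx => (hbound x hx).1
  obtain ⟨t, rfl⟩ := flattened_head_one hflat h1w hge
  simp only [List.tail_cons]
  set A := t.takeWhile (· != 1) with hA
  have h1t : 1 ∈ t := by
    have h2 : (1 :: t).count 1 = t.count 1 + 1 := by simp
    have : t.count 1 = 1 := by omega
    exact List.count_pos_iff.mp (by omega)
  have hdne : t.dropWhile (· != 1) ≠ [] := by
    intro h
    have hall : ∀ x ∈ t, (x != 1) = true := by
      intro x hx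
      have hx' : x ∈ t.takeWhile (· != 1) := by
        rw [← List.takeWhile_append_dropWhile (p := (· != 1)) (l := t), h,
          List.append_nil] at hx
        exact hx
      exact List.mem_takeWhile_imp (p := (· != 1)) hx'
    have := hall 1 h1t
    simp at this
  have hdhead : (t.dropWhile (· != 1)).head hdne = 1 := by
    have := List.head_dropWhile_not (· != 1) (l := t) hdne
    simpa using this
  have hD : t.dropWhile (· != 1) = 1 :: (t.dropWhile (· != 1)).tail := by
    conv_lhs => rw [← List.cons_head_tail hdne]
    rw [hdhead]
  have hteq : t = A ++ 1 :: (t.dropWhile (· != 1)).tail := by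
    conv_lhs => rw [← List.takeWhile_append_dropWhile (p := (· != 1)) (l := t)]
    rw [← hD]
  refine ⟨(t.dropWhile (· != 1)).tail, by simpa using congrArg (List.cons 1) hteq, ?_⟩
  have hsubt : A.Sublist t := List.takeWhile_sublist _
  have hsubw : A.Sublist (1 :: t) := hsubt.trans (List.sublist_cons_self 1 t)
  have hmemA : ∀ x ∈ A, x ∈ List.range' 2 n := by
    intro x hx
    have hne1 : x ≠ 1 := by
      have := List.mem_takeWhile_imp hx
      simpa using this
    have hxw : x ∈ (1 :: t) := hsubw.subset hx
    have := hbound x hxw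
    rw [List.mem_range'_1]
    omega
  have hndA : A.Nodup := by
    rw [List.nodup_iff_count_le_one]
    intro a
    by_cases ha : a = 1
    · subst ha
      have : A.count 1 = 0 := by
        rw [List.count_eq_zero]
        intro h
        have := List.mem_takeWhile_imp h
        simp at this
      omega
    · exact le_trans (hsubw.count_le a) (hcx a ha)
  have hchA : A.Chain' (· ≤ ·) := by
    by_contra hnc
    obtain ⟨A₁, x, y, A₂, heq, hch, hxy⟩ := exists_first_descent A hnc
    set B := (t.dropWhile (· != 1)).tail with hBdef
    have hw_eq : 1 :: t = (1 :: A₁ ++ [x]) ++ (y :: (A₂ ++ 1 :: B)) := by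
      conv_lhs => rw [hteq]
      rw [heq]
      simp
    have hchR : (1 :: A₁ ++ [x]).Chain' (· ≤ ·) := by
      rw [List.cons_append, List.Chain', List.isChain_cons]
      refine ⟨?_, hch⟩
      intro z hz
      have hzmem : z ∈ A₁ ++ [x] := List.mem_of_mem_head? hz
      have hzA : z ∈ A := by
        rw [heq]
        rcases List.mem_append.mp hzmem with h | h
        · exact List.mem_append.mpr (Or.inl h)
        · simp at h
          subst h
          simp
      exact hge z (hsubw.subset hzA)
    have hrunsw : runs (1 :: t) = (1 :: A₁ ++ [x]) :: runs (y :: (A₂ ++ 1 :: B)) := by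
      rw [hw_eq]
      refine runs_sorted_append _ _ (by simp) hchR ?_
      intro a ha h hh
      have hax : a = x := by
        have ha' : a ∈ ((1 :: A₁) ++ [x]).getLast? := ha
        rw [List.getLast?_concat] at ha'
        exact (by simpa using ha' : x = a).symm
      have hhy : h = y := (by simpa using hh : y = h).symm
      subst hax hhy
      exact hxy
    have h1in : (1:ℕ) ∈ heads (y :: (A₂ ++ 1 :: B)) := by
      refine exists_head_one (by simp) ?_
      intro z hz
      refine hge z ?_
      rw [hw_eq]
      exact List.mem_append.mpr (Or.inr hz)
    have hheads : heads (1 :: t) = 1 :: heads (y :: (A₂ ++ 1 :: B)) := by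
      unfold heads
      rw [hrunsw]
      simp
    obtain ⟨u', rs', hry⟩ := runs_cons_ex y (A₂ ++ 1 :: B)
    have hheady : heads (y :: (A₂ ++ 1 :: B)) = y :: rs'.map (fun r => r.headD 0) := by
      unfold heads
      rw [hry]
      simp
    rw [isFlattened_iff_pairwise, hheads, hheady] at hflat
    have hy2 : 2 ≤ y := by
      have hyA : y ∈ A := by rw [heq]; simp
      have := List.mem_range'_1.mp (hmemA y hyA)
      omega
    rw [hheady] at h1in
    rcases List.mem_cons.mp h1in with h | h
    · omega
    · have hpy : (y :: rs'.map (fun r => r.headD 0)).Pairwise (· ≤ ·) :=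
        (List.pairwise_cons.mp hflat).2
      have := (List.pairwise_cons.mp hpy).1 1 h
      omega
  have : A.Pairwise (· < ·) := by
    have hle : A.Pairwise (· ≤ ·) := List.isChain_iff_pairwise.mp hchA
    exact (hle.and hndA).imp (fun h => lt_of_le_of_ne h.1 h.2)
  exact sorted_sublist _ _ (range'_pairwise 2 n) this hmemA

end FlatPF

namespace FlatPF

lemma finite_of_coe_eq (l₀ : List ℕ) : {u : List ℕ | (↑u : Multiset ℕ) = ↑l₀}.Finite := by
  refine (l₀.permutations.finite_toSet).subset ?_
  intro u hu
  simpa [List.mem_permutations] using Multiset.coe_eq_coe.mp hu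

lemma finite_flatInsK1 (n k : ℕ) : (flatInsK {1} (n + 1) k).Finite := by
  refine (finite_of_coe_eq (List.range' 1 (n+1) ++ [1])).subset ?_
  intro w hw
  have := ins1_iff.mp hw.1
  show (↑w : Multiset ℕ) = _
  rw [this]
  rfl

lemma finite_P' (L : List ℕ) (j : ℕ) : (P L j).Finite := by
  refine (finite_of_coe_eq L).subset ?_
  intro u hu
  exact hu.1

lemma ncard_biUnion {ι : Type} [DecidableEq ι] (s : Finset ι) (f : ι → Set (List ℕ))
    (hfin : ∀ i ∈ s, (f i).Finite)
    (hdisj : ∀ i ∈ s, ∀ j ∈ s, i ≠ j → Disjoint (f i) (f j)) :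
    (⋃ i ∈ s, f i).ncard = ∑ i ∈ s, (f i).ncard := by
  induction s using Finset.induction with
  | empty => simp
  | @insert a s ha ih =>
    have hfa : (f a).Finite := hfin a (by simp)
    have hfs : (⋃ i ∈ s, f i).Finite := by
      refine Set.Finite.biUnion s.finite_toSet ?_
      intro i hi
      have hi' : i ∈ s := by simpa using hi
      exact hfin i (by simp [hi'])
    have hd : Disjoint (f a) (⋃ i ∈ s, f i) := by
      rw [Set.disjoint_iUnion_right]
      intro i
      rw [Set.disjoint_iUnion_right]
      intro hi
      have hi' : i ∈ s := by simpa using hi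
      exact hdisj a (by simp) i (by simp [hi']) (fun h => ha (h ▸ hi'))
    rw [Finset.set_biUnion_insert, Set.ncard_union_eq hd hfa hfs, Finset.sum_insert ha,
      ih (fun i hi => hfin i (by simp [hi]))
        (fun i hi j hj hij => hdisj i (by simp [hi]) j (by simp [hj]) hij)]

def SA (n k : ℕ) (A : List ℕ) : Set (List ℕ) :=
  {w | w ∈ flatInsK {1} (n + 1) k ∧ w.tail.takeWhile (· != 1) = A}

lemma union_SA (n k : ℕ) :
    flatInsK {1} (n + 1) k =
      ⋃ A ∈ ((List.range' 2 n).sublists).toFinset, SA n k A := by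
  ext w
  simp only [Set.mem_iUnion, List.mem_toFinset, List.mem_sublists]
  constructor
  · intro hw
    obtain ⟨B, _, hsub⟩ := master hw
    exact ⟨w.tail.takeWhile (· != 1), hsub, hw, rfl⟩
  · rintro ⟨A, _, hw, _⟩
    exact hw

lemma disj_SA (n k : ℕ) {A A' : List ℕ} (h : A ≠ A') : Disjoint (SA n k A) (SA n k A') := by
  rw [Set.disjoint_left]
  rintro w ⟨_, h1⟩ ⟨_, h2⟩
  exact h (h1 ▸ h2 ▸ rfl)

end FlatPF

namespace FlatPF

lemma ms_one (M : Multiset ℕ) : M + {1} = 1 ::ₘ M := by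
  rw [add_comm, Multiset.singleton_add]

lemma range1_succ (n : ℕ) :
    (↑(List.range' 1 (n+1)) : Multiset ℕ) = 1 ::ₘ ↑(List.range' 2 n) := by
  rw [List.range'_succ]
  rfl

lemma card_SA_nil (n k : ℕ) : (SA n k []).ncard = fS 0 (n + 1) k := by
  have himg : SA n k [] = (fun u => 1 :: u) '' flatInsK 0 (n + 1) k := by
    ext w
    constructor
    · rintro ⟨⟨hins, hflat, hruns⟩, hex⟩
      have hmul := ins1_iff.mp hins
      obtain ⟨hbound, hc1, hcx, h1w⟩ := mem_w_facts hmul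
      have hge : ∀ x ∈ w, 1 ≤ x := fun x hx => (hbound x hx).1
      obtain ⟨t, rfl⟩ := flattened_head_one hflat h1w hge
      have hlen : t.length = n + 1 := by
        have := congrArg Multiset.card hmul
        simpa using this
      have htne : t ≠ [] := by
        intro h
        rw [h] at hlen
        simp at hlen
      obtain ⟨c, B, rfl⟩ : ∃ c B, t = c :: B := by
        cases t with
        | nil => exact absurd rfl htne
        | cons c B => exact ⟨c, B, rfl⟩
      simp only [List.tail_cons] at hex
      have hc : c = 1 := by
        by_contra hc
        rw [List.takeWhile_cons_of_pos (by simp [hc])] at hex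
        simp at hex
      subst hc
      refine ⟨1 :: B, ⟨?_, ?_, ?_⟩, rfl⟩
      · rw [ins0_iff, ← Multiset.coe_eq_coe]
        have : (↑(1 :: 1 :: B) : Multiset ℕ) = 1 ::ₘ ↑(1 :: B) := rfl
        rw [this, ms_one] at hmul
        exact (Multiset.cons_inj_right 1).mp hmul
      · exact (flat_one_one B).1.mp hflat
      · rw [← (flat_one_one B).2]
        exact hruns
    · rintro ⟨u, ⟨hins, hflat, hruns⟩, rfl⟩
      have hperm : u.Perm (List.range' 1 (n+1)) := ins0_iff.mp hins
      have h1u : (1:ℕ) ∈ u := hperm.mem_iff.mpr (List.mem_range'_1.mpr (by omega))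
      have hgeu : ∀ x ∈ u, 1 ≤ x := by
        intro x hx
        have := List.mem_range'_1.mp (hperm.mem_iff.mp hx)
        omega
      obtain ⟨B, rfl⟩ := flattened_head_one hflat h1u hgeu
      refine ⟨⟨?_, ?_, ?_⟩, ?_⟩
      · rw [ins1_iff, ms_one]
        show (1 :: 1 :: B : Multiset ℕ) = _
        rw [← Multiset.cons_coe, Multiset.cons_inj_right]
        exact Multiset.coe_eq_coe.mpr hperm
      · exact (flat_one_one B).1.mpr hflat
      · rw [(flat_one_one B).2]
        exact hruns
      · simp
  rw [himg, Set.ncard_image_of_injOn (fun u₁ _ u₂ _ h => by simpa using h)]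
  rfl

lemma card_SA (n k : ℕ) (hk : 1 ≤ k) {A : List ℕ} (hA : A.Sublist (List.range' 2 n))
    (hA0 : A ≠ []) : (SA n k A).ncard = fS 0 (n - A.length + 1) (k - 1) := by
  classical
  set C := (List.range' 2 n).diff A with hCdef
  have hCsub : C.Sublist (List.range' 2 n) := List.diff_sublist _ _
  have hle : (↑A : Multiset ℕ) ≤ ↑(List.range' 2 n) := Multiset.coe_le.mpr hA.subperm
  have hAC : (↑A + ↑C : Multiset ℕ) = ↑(List.range' 2 n) := by
    rw [hCdef, ← Multiset.coe_sub]
    exact add_tsub_cancel_of_le hle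
  have hApair : A.Pairwise (· < ·) := (range'_pairwise 2 n).sublist hA
  have hCpair : C.Pairwise (· < ·) := (range'_pairwise 2 n).sublist hCsub
  have hAge2 : ∀ x ∈ A, 2 ≤ x := by
    intro x hx
    have := List.mem_range'_1.mp (hA.subset hx)
    omega
  have hCge2 : ∀ x ∈ C, 2 ≤ x := by
    intro x hx
    have := List.mem_range'_1.mp (hCsub.subset hx)
    omega
  have hLpair : (1 :: C).Pairwise (· < ·) := by
    refine List.pairwise_cons.mpr ⟨?_, hCpair⟩
    intro x hx
    have := hCge2 x hx
    omega
  have hlenAC : A.length + C.length = n := by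
    have := congrArg Multiset.card hAC
    simpa using this
  -- run structure helper
  have hchain1A : (1 :: A).Chain' (· ≤ ·) := by
    rw [List.Chain', List.isChain_cons]
    refine ⟨?_, List.isChain_iff_pairwise.mpr (hApair.imp le_of_lt)⟩
    intro h hh
    have := hAge2 h (List.mem_of_mem_head? hh)
    omega
  have hlast1A : ∀ x ∈ (1 :: A).getLast?, 2 ≤ x := by
    intro x hx
    obtain ⟨a, A', rfl⟩ : ∃ a A', A = a :: A' := by
      cases A with
      | nil => exact absurd rfl hA0
      | cons a A' => exact ⟨a, A', rfl⟩
    rw [List.getLast?_cons_cons] at hx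
    exact hAge2 x (List.mem_of_mem_getLast? hx)
  have hrunsw : ∀ u : List ℕ, u.head? = some 1 →
      runs ((1 :: A) ++ u) = (1 :: A) :: runs u := by
    intro u hu
    refine runs_sorted_append _ _ (by simp) hchain1A ?_
    intro x hx h hh
    rw [hu] at hh
    have : h = 1 := (by simpa using hh : (1:ℕ) = h).symm
    have := hlast1A x hx
    omega
  have hmsw : (↑(List.range' 1 (n+1)) : Multiset ℕ) + {1} = ↑(1 :: A) + ↑(1 :: C) := by
    rw [ms_one, range1_succ, ← hAC, ← Multiset.cons_coe, ← Multiset.cons_coe,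
      Multiset.cons_add, Multiset.add_cons]
  have himg : SA n k A = (fun u => (1 :: A) ++ u) '' P (1 :: C) (k - 1) := by
    ext w
    constructor
    · rintro ⟨hmem, hex⟩
      obtain ⟨B, hwB, _⟩ := master hmem
      rw [hex] at hwB
      obtain ⟨hins, hflat, hruns⟩ := hmem
      have hmul := ins1_iff.mp hins
      refine ⟨1 :: B, ⟨?_, ?_, ?_⟩, by rw [hwB]⟩
      · show (↑(1 :: B) : Multiset ℕ) = ↑(1 :: C)
        have h1 : (↑(1 :: A) : Multiset ℕ) + ↑(1 :: B) = ↑(1 :: A) + ↑(1 :: C) := by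
          rw [← hmsw, ← hmul, hwB]
          show _ = (↑((1 :: A) ++ (1 :: B)) : Multiset ℕ)
          simp
        exact add_left_cancel h1
      · have hrw : runs w = (1 :: A) :: runs (1 :: B) := by
          rw [hwB]
          exact hrunsw (1 :: B) rfl
        rw [isFlattened_iff_pairwise] at hflat ⊢
        unfold heads at hflat ⊢
        rw [hrw] at hflat
        simp only [List.map_cons] at hflat
        exact (List.pairwise_cons.mp hflat).2
      · have hrw : runs w = (1 :: A) :: runs (1 :: B) := by
          rw [hwB]
          exact hrunsw (1 :: B) rfl
        unfold numRuns at hruns ⊢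
        rw [hrw] at hruns
        simp only [List.length_cons] at hruns
        omega
    · rintro ⟨u, hu, rfl⟩
      have hmemu := P_mem_of_mem hu
      have hgeu : ∀ x ∈ u, 1 ≤ x := by
        intro x hx
        rcases List.mem_cons.mp (hmemu x hx) with rfl | h
        · omega
        · have := hCge2 x h
          omega
      have h1u : (1:ℕ) ∈ u := by
        have : (1:ℕ) ∈ (↑u : Multiset ℕ) := by
          rw [hu.1]
          simp
        simpa using this
      obtain ⟨B, rfl⟩ := flattened_head_one hu.2.1 h1u hgeu
      have hrw : runs ((1 :: A) ++ (1 :: B)) = (1 :: A) :: runs (1 :: B) :=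
        hrunsw (1 :: B) rfl
      refine ⟨⟨?_, ?_, ?_⟩, ?_⟩
      · rw [ins1_iff, hmsw]
        show (↑((1 :: A) ++ (1 :: B)) : Multiset ℕ) = _
        rw [← hu.1]
        simp
      · rw [isFlattened_iff_pairwise]
        unfold heads
        rw [hrw]
        simp only [List.map_cons]
        refine List.pairwise_cons.mpr ⟨?_, ?_⟩
        · intro x hx
          simp only [List.headD_cons]
          exact hgeu x (mem_heads hx)
        · have h2 := isFlattened_iff_pairwise.mp hu.2.1
          unfold heads at h2
          exact h2
      · unfold numRuns
        rw [hrw]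
        simp only [List.length_cons]
        have := hu.2.2
        unfold numRuns at this
        omega
      · show ((1 :: A) ++ (1 :: B)).tail.takeWhile (· != 1) = A
        simp only [List.cons_append, List.tail_cons]
        rw [List.takeWhile_append_of_pos (by
          intro a ha
          have := hAge2 a ha
          simp
          omega)]
        rw [List.takeWhile_cons_of_neg (by simp)]
        simp
  rw [himg, Set.ncard_image_of_injOn (fun u₁ _ u₂ _ h => by simpa using h)]
  have := ncard_P_sorted (1 :: C) hLpair (k - 1)
  rw [this]
  congr 1
  simp only [List.length_cons]
  omega

end FlatPF


open FlatPF in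
/-- For `1 ≤ k < n`,
`f({1}; n+1, k) = f_{n+1,k} + ∑_{i=1}^{n} C(n,i) f_{n-i+1, k-1}`. -/
theorem stmt13 (n k : ℕ) (hk : 1 ≤ k) (hkn : k < n) :
    fS {1} (n + 1) k =
      fS 0 (n + 1) k + ∑ i ∈ Finset.Icc 1 n, n.choose i * fS 0 (n - i + 1) (k - 1) := by
  classical
  set F : Finset (List ℕ) := ((List.range' 2 n).sublists).toFinset with hF
  have hmemF : ∀ A : List ℕ, A ∈ F ↔ A.Sublist (List.range' 2 n) := by
    intro A
    simp [hF, List.mem_sublists]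
  have hcard : fS {1} (n+1) k = ∑ A ∈ F, (SA n k A).ncard := by
    unfold fS
    rw [union_SA n k]
    exact ncard_biUnion F (SA n k)
      (fun A _ => (finite_flatInsK1 n k).subset (fun w hw => hw.1))
      (fun A _ A' _ h => disj_SA n k h)
  have hnilF : ([] : List ℕ) ∈ F := (hmemF []).mpr (List.nil_sublist _)
  rw [hcard, ← Finset.add_sum_erase F _ hnilF, card_SA_nil n k]
  congr 1
  have hmaps : ∀ A ∈ F.erase [], A.length ∈ Finset.Icc 1 n := by
    intro A hA
    obtain ⟨hne, hmem⟩ := Finset.mem_erase.mp hA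
    have hsub := (hmemF A).mp hmem
    have h1 : 1 ≤ A.length := by
      cases A with
      | nil => exact absurd rfl hne
      | cons a t => simp
    have h2 : A.length ≤ n := by
      have := hsub.length_le
      simpa using this
    exact Finset.mem_Icc.mpr ⟨h1, h2⟩
  rw [← Finset.sum_fiberwise_of_maps_to hmaps]
  refine Finset.sum_congr rfl ?_
  intro i hi
  have hi1 : 1 ≤ i := (Finset.mem_Icc.mp hi).1
  have hconst : ∀ A ∈ (F.erase []).filter (fun A => A.length = i),
      (SA n k A).ncard = fS 0 (n - i + 1) (k - 1) := by
    intro A hA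
    obtain ⟨hA', hlen⟩ := Finset.mem_filter.mp hA
    obtain ⟨hne, hmem⟩ := Finset.mem_erase.mp hA'
    rw [card_SA n k hk ((hmemF A).mp hmem) hne, hlen]
  rw [Finset.sum_congr rfl hconst, Finset.sum_const, smul_eq_mul]
  congr 1
  have hset : (F.erase []).filter (fun A => A.length = i) =
      ((List.range' 2 n).sublistsLen i).toFinset := by
    ext A
    simp only [Finset.mem_filter, Finset.mem_erase, List.mem_toFinset, List.mem_sublistsLen,
      hmemF]
    constructor
    · rintro ⟨⟨_, hs⟩, hl⟩
      exact ⟨(hmemF A).mp (by simpa [hF] using hs), hl⟩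
    · rintro ⟨hs, hl⟩
      refine ⟨⟨?_, by simpa [hF, List.mem_sublists] using hs⟩, hl⟩
      intro h
      rw [h] at hl
      simp at hl
      omega
  rw [hset, List.card_toFinset,
    List.Nodup.dedup (List.nodup_sublistsLen i (List.nodup_range' (s := 2) (n := n))),
    List.length_sublistsLen]
  simp
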